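/- For every 0 < δ ≤ 1 and every positive integer n, there exists a partially ordered set Q on n points with comp(Q) ≤ δ·n(n−1)/2 and e(Q) ≤ ⌈1/δ⌉^n. -/

import Mathlib

/-- The number of linear extensions of a partial order `P` on `n` points:
bijections to `{1, ..., n}` (modeled as `Fin n` with its usual order) that
are strictly monotone with respect to `P`. -/
noncomputable def linExtCount (n : ℕ) (P : PartialOrder (Fin n)) : ℕ :=
  Nat.card {f : Fin n ≃ Fin n // ∀ x y : Fin n, P.lt x y → f x < f y}

/-- The number of comparable pairs of `P`: each unordered comparable pair
`{x, y}` corresponds to exactly one ordered pair `(x, y)` with `x ≺ y`. -/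
noncomputable def compCount (n : ℕ) (P : PartialOrder (Fin n)) : ℕ :=
  Nat.card {p : Fin n × Fin n // P.lt p.1 p.2}


/-- Partial order on `Fin n`: `x ≤ y` iff same residue class mod `k` and `x ≤ y`.
This is a disjoint union of `k` balanced chains. -/
def blockOrder (n k : ℕ) : PartialOrder (Fin n) where
  le x y := x.val % k = y.val % k ∧ x ≤ y
  lt x y := x.val % k = y.val % k ∧ x < y
  le_refl x := ⟨rfl, le_rfl⟩
  le_trans a b c h1 h2 := ⟨h1.1.trans h2.1, h1.2.trans h2.2⟩
  le_antisymm a b h1 h2 := le_antisymm h1.2 h2.2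
  lt_iff_le_not_ge a b := by
    constructor
    · rintro ⟨h1, h2⟩
      exact ⟨⟨h1, le_of_lt h2⟩, fun h => absurd h.2 (not_le.mpr h2)⟩
    · rintro ⟨⟨h1, h2⟩, h3⟩
      refine ⟨h1, lt_of_le_not_ge h2 fun hba => h3 ⟨h1.symm, hba⟩⟩

lemma blockOrder_lt {n k : ℕ} {x y : Fin n} :
    (blockOrder n k).lt x y ↔ (x.val % k = y.val % k ∧ x < y) := Iff.rfl

theorem exists_sparse_with_few_extensions (δ : ℝ) (hδ0 : 0 < δ) (hδ1 : δ ≤ 1)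
    (n : ℕ) (hn : 1 ≤ n) :
    ∃ P : PartialOrder (Fin n),
      (compCount n P : ℝ) ≤ δ * ((n : ℝ) * ((n : ℝ) - 1) / 2) ∧
      linExtCount n P ≤ ⌈1 / δ⌉₊ ^ n := by
  classical
  set k : ℕ := ⌈1 / δ⌉₊ with hkdef
  have hk : 0 < k := Nat.ceil_pos.mpr (by positivity)
  refine ⟨blockOrder n k, ?_, ?_⟩
  · -- comparability bound
    -- first: 2 * k * compCount ≤ n * (n - 1) in ℕ
    haveI : ∀ y : Fin n, Fintype {x : Fin n // (blockOrder n k).lt x y} :=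
      fun y => Fintype.ofFinite _
    have hcard : compCount n (blockOrder n k)
        = ∑ y : Fin n, Fintype.card {x : Fin n // (blockOrder n k).lt x y} := by
      rw [compCount]
      have e : {p : Fin n × Fin n // (blockOrder n k).lt p.1 p.2}
          ≃ Σ y : Fin n, {x : Fin n // (blockOrder n k).lt x y} :=
        { toFun := fun p => ⟨p.1.2, p.1.1, p.2⟩
          invFun := fun s => ⟨(s.2.1, s.1), s.2.2⟩
          left_inv := fun p => rfl
          right_inv := fun s => rfl }
      rw [Nat.card_congr e, Nat.card_eq_fintype_card, Fintype.card_sigma]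
    have hy : ∀ y : Fin n,
        k * Fintype.card {x : Fin n // (blockOrder n k).lt x y} ≤ y.val := by
      intro y
      have hle : Fintype.card {x : Fin n // (blockOrder n k).lt x y}
          ≤ Fintype.card (Fin (y.val / k)) := by
        apply Fintype.card_le_of_injective
          (fun x => ⟨x.1.val / k, by
            obtain ⟨hm, hlt⟩ := x.2
            by_contra hcon
            push_neg at hcon
            have h5 : k * (y.val / k) ≤ k * (x.1.val / k) :=
              Nat.mul_le_mul_left k hcon
            have hyx : y.val ≤ x.1.val := by
              calc y.val = k * (y.val / k) + y.val % k :=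
                    (Nat.div_add_mod y.val k).symm
                _ ≤ k * (x.1.val / k) + x.1.val % k :=
                    Nat.add_le_add h5 (le_of_eq hm.symm)
                _ = x.1.val := Nat.div_add_mod x.1.val k
            exact absurd (show x.1.val < y.val from hlt) (not_lt.mpr hyx)⟩)
        intro a b hab
        have h1 : a.1.val / k = b.1.val / k := congrArg Fin.val hab
        have ha := a.2.1
        have hb := b.2.1
        have h2 := Nat.div_add_mod a.1.val k
        have h3 := Nat.div_add_mod b.1.val k
        have h4 : k * (a.1.val / k) = k * (b.1.val / k) := by rw [h1]
        apply Subtype.ext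
        apply Fin.ext
        omega
      simp only [Fintype.card_fin] at hle
      calc k * Fintype.card {x : Fin n // (blockOrder n k).lt x y}
          ≤ k * (y.val / k) := Nat.mul_le_mul_left k hle
        _ ≤ y.val := Nat.mul_div_le y.val k
    have hsum : k * compCount n (blockOrder n k) ≤ ∑ y : Fin n, y.val := by
      rw [hcard, Finset.mul_sum]
      exact Finset.sum_le_sum fun y _ => hy y
    have hgauss : (∑ y : Fin n, y.val) * 2 = n * (n - 1) := by
      rw [Fin.sum_univ_eq_sum_range (fun i => i) n]
      exact Finset.sum_range_id_mul_two n
    have hnat : 2 * (k * compCount n (blockOrder n k)) ≤ n * (n - 1) := by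
      omega
    -- cast to ℝ
    have hcast : ((n * (n - 1) : ℕ) : ℝ) = (n : ℝ) * ((n : ℝ) - 1) := by
      have : (1:ℕ) ≤ n := hn
      push_cast [Nat.cast_sub this]
      ring
    have hR : 2 * ((k : ℝ) * (compCount n (blockOrder n k) : ℝ))
        ≤ (n : ℝ) * ((n : ℝ) - 1) := by
      rw [← hcast]
      exact_mod_cast hnat
    have hkδ : 1 ≤ δ * k := by
      have h1 : (1 / δ : ℝ) ≤ k := Nat.le_ceil (1 / δ)
      calc (1:ℝ) = δ * (1 / δ) := by field_simp
        _ ≤ δ * k := by nlinarith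
    have hkpos : (0:ℝ) < k := by exact_mod_cast hk
    have hnn : (0:ℝ) ≤ (n : ℝ) * ((n : ℝ) - 1) := by
      have : (1:ℝ) ≤ n := by exact_mod_cast hn
      nlinarith
    calc (compCount n (blockOrder n k) : ℝ)
        ≤ (n : ℝ) * ((n : ℝ) - 1) / (2 * k) := by
          rw [le_div_iff₀ (by positivity)]
          nlinarith
      _ ≤ δ * ((n : ℝ) * ((n : ℝ) - 1) / 2) := by
          rw [div_le_iff₀ (by positivity)]
          have : δ * ((n : ℝ) * ((n : ℝ) - 1) / 2) * (2 * k)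
              = (n : ℝ) * ((n : ℝ) - 1) * (δ * k) := by ring
          rw [this]
          nlinarith
  · -- extension count bound
    unfold linExtCount
    have key : Nat.card {f : Fin n ≃ Fin n //
        ∀ x y : Fin n, (blockOrder n k).lt x y → f x < f y}
        ≤ Nat.card (Fin n → Fin k) := by
      apply Nat.card_le_card_of_injective
        (fun f => fun i => (⟨(f.1.symm i).val % k, Nat.mod_lt _ hk⟩ : Fin k))
      intro f g hfg
      have hmod : ∀ i : Fin n, (f.1.symm i).val % k = (g.1.symm i).val % k := by
        intro i
        have := congrFun hfg i
        simpa using congrArg Fin.val this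
      apply Subtype.ext
      have hsymm : f.1.symm = g.1.symm := by
        apply Equiv.ext
        by_contra hne
        push_neg at hne
        obtain ⟨i0, hi0⟩ := hne
        -- minimal counterexample
        set S : Finset (Fin n) := Finset.univ.filter (fun i => f.1.symm i ≠ g.1.symm i)
          with hS
        have hSne : S.Nonempty := ⟨i0, by simp [hS, hi0]⟩
        set i := S.min' hSne with hi
        have hiS : i ∈ S := S.min'_mem hSne
        have hieq : f.1.symm i ≠ g.1.symm i := by
          simpa [hS] using hiS
        have hmin : ∀ j : Fin n, j < i → f.1.symm j = g.1.symm j := by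
          intro j hj
          by_contra hc
          have : j ∈ S := by simp [hS, hc]
          exact absurd (S.min'_le j this) (not_le.mpr hj)
        set x := f.1.symm i with hx
        set y := g.1.symm i with hy
        have hm : x.val % k = y.val % k := hmod i
        rcases lt_trichotomy x y with hlt | heq | hgt
        · have hltP : (blockOrder n k).lt x y := ⟨hm, hlt⟩
          have hgxlt : g.1 x < i := by
            have := g.2 x y hltP
            rwa [hy, g.1.apply_symm_apply] at this
          have hfj : f.1.symm (g.1 x) = x := by
            rw [hmin _ hgxlt, g.1.symm_apply_apply]
          have hgxi : g.1 x = i := f.1.symm.injective (by rw [hfj])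
          rw [hgxi] at hgxlt
          exact absurd hgxlt (lt_irrefl i)
        · exact hieq heq
        · have hltP : (blockOrder n k).lt y x := ⟨hm.symm, hgt⟩
          have hfylt : f.1 y < i := by
            have := f.2 y x hltP
            rwa [hx, f.1.apply_symm_apply] at this
          have hgj : g.1.symm (f.1 y) = y := by
            rw [← hmin _ hfylt, f.1.symm_apply_apply]
          have hfyi : f.1 y = i := g.1.symm.injective (by rw [hgj])
          rw [hfyi] at hfylt
          exact absurd hfylt (lt_irrefl i)
      exact (Equiv.symm_bijective.injective hsymm)
    calc Nat.card {f : Fin n ≃ Fin n //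
          ∀ x y : Fin n, (blockOrder n k).lt x y → f x < f y}
        ≤ Nat.card (Fin n → Fin k) := key
      _ = k ^ n := by simp [Nat.card_eq_fintype_card]
      _ = ⌈1 / δ⌉₊ ^ n := by rw [hkdef]
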